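/- Fix a finite type σ over Ω, a countable ordinal ζ, and a family (f_ξ)_{ξ<ζ} ⊆ Ω_σ. If f_α ≤hp f_γ whenever α < γ < ζ, then limsup_{ξ→ζ} f_ξ =hp sup_{ξ<ζ} f_ξ. -/

import Mathlib

/-!  Framework: finite type structure over Ω = countable ordinals,
     limsup/liminf, transfinite iteration functionals, hereditarily
     positive and hereditarily monotone functionals. -/

noncomputable section
namespace IterOrd

open Ordinal

theorem omega1_pos : (0 : Ordinal) < ω₁ := Ordinal.omega0_pos.trans Ordinal.omega0_lt_omega_one

/-- `Om` is Ω, the set of countable ordinals (ordinals `< ω₁`). -/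
abbrev Om : Type 1 := {o : Ordinal // o < ω₁}

/-- Infimum of a subset of Ω (the minimum for nonempty sets; `0` for `∅`). -/
def infOm (s : Set Om) : Om :=
  ⟨sInf (Subtype.val '' s), by
    rcases (Subtype.val '' s).eq_empty_or_nonempty with h | h
    · rw [h]; simpa using omega1_pos
    · obtain ⟨x, _, he⟩ := csInf_mem h
      exact he ▸ x.2⟩

/-- Supremum of a subset of Ω.  Whenever the supremum of the set exists in Ω
(in particular for every countable subset, by regularity of `ω₁`) this is the
genuine supremum; otherwise it takes a junk value. -/
def supOm (s : Set Om) : Om :=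
  if h : sSup (Subtype.val '' s) < ω₁ then ⟨sSup (Subtype.val '' s), h⟩ else ⟨0, omega1_pos⟩

/-- Finite types over the base type `o` (interpreted as Ω). -/
inductive Ty : Type
  | base : Ty
  | arrow : Ty → Ty → Ty
deriving DecidableEq

/-- The full type structure over Ω: `El base = Ω` and
`El (arrow σ τ)` is the set of all functions `El σ → El τ`. -/
@[reducible] def El : Ty → Type 1
  | .base => Om
  | .arrow σ τ => El σ → El τ

/-- The order on each `El σ`: the ordinal order at base type, pointwise at arrow types. -/
def Le : (σ : Ty) → El σ → El σ → Prop
  | .base => fun x y => x ≤ y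
  | .arrow σ τ => fun f g => ∀ x : El σ, Le τ (f x) (g x)

/-- Suprema, computed pointwise at function types. -/
def supEl : (σ : Ty) → Set (El σ) → El σ
  | .base => supOm
  | .arrow σ τ => fun S (x : El σ) => supEl τ ((fun f : El (.arrow σ τ) => f x) '' S)

/-- Infima, computed pointwise at function types. -/
def infEl : (σ : Ty) → Set (El σ) → El σ
  | .base => infOm
  | .arrow σ τ => fun S (x : El σ) => infEl τ ((fun f : El (.arrow σ τ) => f x) '' S)

/-- `limsup_{ξ→ζ} f ξ = inf_{γ<ζ} sup_{γ≤ξ<ζ} f ξ`. -/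
def limsupEl (σ : Ty) (ζ : Ordinal) (f : ∀ ξ : Ordinal, ξ < ζ → El σ) : El σ :=
  infEl σ {y | ∃ γ, ∃ _ : γ < ζ, y = supEl σ {z | ∃ ξ, ∃ h : ξ < ζ, γ ≤ ξ ∧ z = f ξ h}}

/-- `liminf_{ξ→ζ} f ξ = sup_{γ<ζ} inf_{γ≤ξ<ζ} f ξ`. -/
def liminfEl (σ : Ty) (ζ : Ordinal) (f : ∀ ξ : Ordinal, ξ < ζ → El σ) : El σ :=
  supEl σ {y | ∃ γ, ∃ _ : γ < ζ, y = infEl σ {z | ∃ ξ, ∃ h : ξ < ζ, γ ≤ ξ ∧ z = f ξ h}}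

/-- `limsup` of a ζ-indexed sequence of ordinals. -/
def oLimsup (ζ : Ordinal) (a : Ordinal → Ordinal) : Ordinal :=
  sInf {s | ∃ γ, γ < ζ ∧ s = sSup (a '' {ξ | γ ≤ ξ ∧ ξ < ζ})}

/-- `liminf` of a ζ-indexed sequence of ordinals. -/
def oLiminf (ζ : Ordinal) (a : Ordinal → Ordinal) : Ordinal :=
  sSup {s | ∃ γ, γ < ζ ∧ s = sInf (a '' {ξ | γ ≤ ξ ∧ ξ < ζ})}

/-- The α-iteration functional of type σ:
`Iter 0 f x = x`, `Iter (α+1) f x = f (Iter α f x)`, and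
`Iter μ f x = limsup_{ξ→μ} Iter ξ f x` for limit μ. -/
def Iter (σ : Ty) (α : Ordinal) : (El σ → El σ) → El σ → El σ :=
  Ordinal.limitRecOn (motive := fun _ => (El σ → El σ) → El σ → El σ) α
    (fun _ x => x)
    (fun _ ih f x => f (ih f x))
    (fun μ _ ih f x => limsupEl σ μ (fun ξ h => ih ξ h f x))

/-- The pair (hereditarily positive, ≤hp), defined simultaneously by recursion on the type.
Every element of `Ω` and of `Ω_{ρ→τ}` with `ρ ≠ τ` is h.p., and `≤hp` there is `≤`;
`f : Ω_{τ→τ}` is h.p. iff it preserves h.p., is inflationary on h.p. arguments and is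
monotone (w.r.t. `≤hp`) on h.p. arguments; `f ≤hp f'` on `Ω_{τ→τ}` iff `f x ≤hp f' x`
for every h.p. `x`. -/
def HPaux : (σ : Ty) → (El σ → Prop) × (El σ → El σ → Prop)
  | .base => ⟨fun _ => True, fun x y => x ≤ y⟩
  | .arrow ρ τ =>
      ⟨fun f =>
        if h : ρ = τ then
          (∀ x, (HPaux ρ).1 x → (HPaux τ).1 (f x)) ∧
          (∀ x, (HPaux ρ).1 x → (HPaux τ).2 (cast (congrArg El h) x) (f x)) ∧
          (∀ x y, (HPaux ρ).1 x → (HPaux ρ).1 y → (HPaux ρ).2 x y → (HPaux τ).2 (f x) (f y))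
        else True,
       fun f g =>
        if ρ = τ then ∀ x, (HPaux ρ).1 x → (HPaux τ).2 (f x) (g x)
        else Le (.arrow ρ τ) f g⟩

/-- Hereditarily positive functionals. -/
def Hp (σ : Ty) : El σ → Prop := (HPaux σ).1

/-- The order `≤hp`. -/
def HpLe (σ : Ty) : El σ → El σ → Prop := (HPaux σ).2

/-- `f =hp g` iff `f ≤hp g` and `g ≤hp f`. -/
def HpEq (σ : Ty) (f g : El σ) : Prop := HpLe σ f g ∧ HpLe σ g f

/-- The pair (hereditarily monotone, ≤ on the hereditarily monotone structure),
by recursion on the type.  `f` is hereditarily monotone iff it maps hereditarily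
monotone arguments to hereditarily monotone values, monotonically; the order is
pointwise over hereditarily monotone arguments (i.e. the order of `Ω^mon`). -/
def HMaux : (σ : Ty) → (El σ → Prop) × (El σ → El σ → Prop)
  | .base => ⟨fun _ => True, fun x y => x ≤ y⟩
  | .arrow σ τ =>
      ⟨fun f =>
        (∀ x, (HMaux σ).1 x → (HMaux τ).1 (f x)) ∧
        (∀ x y, (HMaux σ).1 x → (HMaux σ).1 y → (HMaux σ).2 x y → (HMaux τ).2 (f x) (f y)),
       fun f g => ∀ x, (HMaux σ).1 x → (HMaux τ).2 (f x) (g x)⟩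

/-- Hereditarily monotone functionals: the members of the type structure `Ω^mon`. -/
def HM (σ : Ty) : El σ → Prop := (HMaux σ).1

/-- The (pointwise) order of the hereditarily monotone type structure `Ω^mon`. -/
def LeHM (σ : Ty) : El σ → El σ → Prop := (HMaux σ).2

/-- Equality in the hereditarily monotone type structure `Ω^mon`. -/
def EqHM (σ : Ty) (f g : El σ) : Prop := LeHM σ f g ∧ LeHM σ g f

lemma bddAbove_val_image (S : Set Om) : BddAbove (Subtype.val '' S) := by
  refine ⟨ω₁, ?_⟩
  rintro a ⟨x, _, rfl⟩
  exact x.2.le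

lemma eval_image_tail {σ τ : Ty} (ζ : Ordinal) (f : ∀ ξ : Ordinal, ξ < ζ → El (.arrow σ τ))
    (γ : Ordinal) (x : El σ) :
    (fun g : El (.arrow σ τ) => g x) '' {z | ∃ ξ, ∃ h : ξ < ζ, γ ≤ ξ ∧ z = f ξ h} =
    {z | ∃ ξ, ∃ h : ξ < ζ, γ ≤ ξ ∧ z = f ξ h x} := by
  ext z
  constructor
  · rintro ⟨g, ⟨ξ, hξ, hγξ, rfl⟩, rfl⟩
    exact ⟨ξ, hξ, hγξ, rfl⟩
  · rintro ⟨ξ, hξ, hγξ, rfl⟩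
    exact ⟨f ξ hξ, ⟨ξ, hξ, hγξ, rfl⟩, rfl⟩

lemma eval_image_full {σ τ : Ty} (ζ : Ordinal) (f : ∀ ξ : Ordinal, ξ < ζ → El (.arrow σ τ))
    (x : El σ) :
    (fun g : El (.arrow σ τ) => g x) '' {y | ∃ ξ, ∃ hξ : ξ < ζ, y = f ξ hξ} =
    {y | ∃ ξ, ∃ hξ : ξ < ζ, y = f ξ hξ x} := by
  ext z
  constructor
  · rintro ⟨g, ⟨ξ, hξ, rfl⟩, rfl⟩
    exact ⟨ξ, hξ, rfl⟩
  · rintro ⟨ξ, hξ, rfl⟩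
    exact ⟨f ξ hξ, ⟨ξ, hξ, rfl⟩, rfl⟩

lemma limsupEl_apply {σ τ : Ty} (ζ : Ordinal) (f : ∀ ξ : Ordinal, ξ < ζ → El (.arrow σ τ))
    (x : El σ) :
    limsupEl (.arrow σ τ) ζ f x = limsupEl τ ζ (fun ξ h => f ξ h x) := by
  show infEl τ ((fun g : El (.arrow σ τ) => g x) ''
      {y | ∃ γ, ∃ _ : γ < ζ, y = supEl (.arrow σ τ) {z | ∃ ξ, ∃ h : ξ < ζ, γ ≤ ξ ∧ z = f ξ h}}) =
    infEl τ {y | ∃ γ, ∃ _ : γ < ζ, y = supEl τ {z | ∃ ξ, ∃ h : ξ < ζ, γ ≤ ξ ∧ z = f ξ h x}}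
  congr 1
  ext z
  constructor
  · rintro ⟨g, ⟨γ, hγ, rfl⟩, rfl⟩
    refine ⟨γ, hγ, ?_⟩
    show supEl τ ((fun g : El (.arrow σ τ) => g x) '' _) = _
    rw [eval_image_tail]
  · rintro ⟨γ, hγ, rfl⟩
    refine ⟨supEl (.arrow σ τ) {z | ∃ ξ, ∃ h : ξ < ζ, γ ≤ ξ ∧ z = f ξ h}, ⟨γ, hγ, rfl⟩, ?_⟩
    show supEl τ ((fun g : El (.arrow σ τ) => g x) '' _) = _
    rw [eval_image_tail]

lemma limsup_eq_sup_base (ζ : Ordinal)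
    (f : ∀ ξ : Ordinal, ξ < ζ → Om)
    (h : ∀ α γ (hαγ : α < γ) (hγ : γ < ζ), f α (hαγ.trans hγ) ≤ f γ hγ) :
    limsupEl .base ζ f = supEl .base {y | ∃ ξ, ∃ hξ : ξ < ζ, y = f ξ hξ} := by
  rcases eq_or_ne ζ 0 with rfl | hζ0
  · have h1 : {y : Om | ∃ γ, ∃ _ : γ < (0 : Ordinal),
        y = supEl .base {z | ∃ ξ, ∃ h : ξ < (0 : Ordinal), γ ≤ ξ ∧ z = f ξ h}} = ∅ := by
      ext y; simp [not_lt_zero]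
    have h2 : {y : Om | ∃ ξ, ∃ hξ : ξ < (0 : Ordinal), y = f ξ hξ} = ∅ := by
      ext y; simp [not_lt_zero]
    show infOm _ = supOm _
    rw [h1, h2]
    apply Subtype.ext
    simp [infOm, supOm, omega1_pos]
  · have hζ : (0 : Ordinal) < ζ := pos_iff_ne_zero.mpr hζ0
    set F : Set Om := {y | ∃ ξ, ∃ hξ : ξ < ζ, y = f ξ hξ} with hF
    have hFne : (Subtype.val '' F).Nonempty :=
      ⟨(f 0 hζ).1, ⟨f 0 hζ, ⟨0, hζ, rfl⟩, rfl⟩⟩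
    -- monotonicity in ≤ form
    have hmono : ∀ α γ (hα : α < ζ) (hγ : γ < ζ), α ≤ γ → f α hα ≤ f γ hγ := by
      intro α γ hα hγ hle
      rcases lt_or_eq_of_le hle with hlt | rfl
      · exact h α γ hlt hγ
      · exact le_refl _
    have key : ∀ γ, γ < ζ →
        supOm {z | ∃ ξ, ∃ h : ξ < ζ, γ ≤ ξ ∧ z = f ξ h} = supOm F := by
      intro γ hγ
      set T : Set Om := {z | ∃ ξ, ∃ h : ξ < ζ, γ ≤ ξ ∧ z = f ξ h} with hT
      have hTsub : T ⊆ F := by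
        rintro z ⟨ξ, hξ, _, rfl⟩; exact ⟨ξ, hξ, rfl⟩
      have hTne : (Subtype.val '' T).Nonempty :=
        ⟨(f γ hγ).1, ⟨f γ hγ, ⟨γ, hγ, le_refl _, rfl⟩, rfl⟩⟩
      have himg : sSup (Subtype.val '' T) = sSup (Subtype.val '' F) := by
        apply le_antisymm
        · exact csSup_le_csSup (bddAbove_val_image F) hTne (Set.image_mono hTsub)
        · apply csSup_le hFne
          rintro a ⟨z, ⟨ξ, hξ, rfl⟩, rfl⟩
          have hη : max ξ γ < ζ := max_lt hξ hγ
          have hle : f ξ hξ ≤ f (max ξ γ) hη := hmono ξ (max ξ γ) hξ hη (le_max_left _ _)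
          calc (f ξ hξ).1 ≤ (f (max ξ γ) hη).1 := hle
            _ ≤ sSup (Subtype.val '' T) := by
                apply le_csSup (bddAbove_val_image T)
                exact ⟨f (max ξ γ) hη, ⟨max ξ γ, hη, le_max_right _ _, rfl⟩, rfl⟩
      simp only [supOm, himg]
    have hSet : {y : Om | ∃ γ, ∃ _ : γ < ζ,
        y = supEl .base {z | ∃ ξ, ∃ h : ξ < ζ, γ ≤ ξ ∧ z = f ξ h}} = {supOm F} := by
      ext y
      constructor
      · rintro ⟨γ, hγ, rfl⟩
        exact key γ hγ
      · rintro rfl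
        exact ⟨0, hζ, (key 0 hζ).symm⟩
    show infOm _ = supOm F
    rw [hSet]
    apply Subtype.ext
    simp [infOm]

/-- For a family monotone w.r.t. the pointwise order `Le`, limsup equals sup on the nose. -/
lemma limsup_eq_sup_of_mono (σ : Ty) (ζ : Ordinal)
    (f : ∀ ξ : Ordinal, ξ < ζ → El σ)
    (h : ∀ α γ (hαγ : α < γ) (hγ : γ < ζ), Le σ (f α (hαγ.trans hγ)) (f γ hγ)) :
    limsupEl σ ζ f = supEl σ {y | ∃ ξ, ∃ hξ : ξ < ζ, y = f ξ hξ} := by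
  induction σ with
  | base => exact limsup_eq_sup_base ζ f h
  | arrow σ τ ihσ ihτ =>
    funext x
    have h2 : supEl (.arrow σ τ) {y | ∃ ξ, ∃ hξ : ξ < ζ, y = f ξ hξ} x =
        supEl τ {y | ∃ ξ, ∃ hξ : ξ < ζ, y = f ξ hξ x} := by
      show supEl τ ((fun g : El (.arrow σ τ) => g x) '' _) = _
      rw [eval_image_full]
    rw [limsupEl_apply, h2]
    exact ihτ (fun ξ h => f ξ h x) (fun α γ hαγ hγ => h α γ hαγ hγ x)

lemma le_refl_Le (σ : Ty) (x : El σ) : Le σ x x := by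
  induction σ with
  | base => exact le_refl _
  | arrow σ τ ihσ ihτ => exact fun y => ihτ (x y)

/-- If `f_α ≤hp f_γ` whenever `α < γ < ζ`, then
`limsup_{ξ→ζ} f_ξ =hp sup_{ξ<ζ} f_ξ`. -/
theorem limsup_hpEq_sup (σ : Ty) (ζ : Ordinal) (hζ : ζ < ω₁)
    (f : ∀ ξ : Ordinal, ξ < ζ → El σ)
    (h : ∀ α γ (hαγ : α < γ) (hγ : γ < ζ), HpLe σ (f α (hαγ.trans hγ)) (f γ hγ)) :
    HpEq σ (limsupEl σ ζ f) (supEl σ {y | ∃ ξ, ∃ hξ : ξ < ζ, y = f ξ hξ}) := by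
  induction σ with
  | base =>
    have e := limsup_eq_sup_base ζ f h
    exact ⟨le_of_eq e, le_of_eq e.symm⟩
  | arrow ρ τ ihρ ihτ =>
    by_cases he : ρ = τ
    · subst he
      constructor <;>
        · show HpLe (.arrow ρ ρ) _ _
          simp only [HpLe, HPaux, if_pos rfl]
          intro x hx
          have h2 : supEl (.arrow ρ ρ) {y | ∃ ξ, ∃ hξ : ξ < ζ, y = f ξ hξ} x =
              supEl ρ {y | ∃ ξ, ∃ hξ : ξ < ζ, y = f ξ hξ x} := by
            show supEl ρ ((fun g : El (.arrow ρ ρ) => g x) '' _) = _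
            rw [eval_image_full]
          rw [limsupEl_apply, h2]
          have h' : ∀ α γ (hαγ : α < γ) (hγ : γ < ζ),
              HpLe ρ (f α (hαγ.trans hγ) x) (f γ hγ x) := by
            intro α γ hαγ hγ
            have := h α γ hαγ hγ
            simp only [HpLe, HPaux, if_pos rfl] at this
            exact this x hx
          have := ihτ (fun ξ h => f ξ h x) h'
          first
            | exact this.1
            | exact this.2
    · have h' : ∀ α γ (hαγ : α < γ) (hγ : γ < ζ),
          Le (.arrow ρ τ) (f α (hαγ.trans hγ)) (f γ hγ) := by
        intro α γ hαγ hγ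
        have := h α γ hαγ hγ
        simp only [HpLe, HPaux, if_neg he] at this
        exact this
      have e := limsup_eq_sup_of_mono (.arrow ρ τ) ζ f h'
      constructor <;>
        · show HpLe (.arrow ρ τ) _ _
          simp only [HpLe, HPaux, if_neg he]
          rw [e]
          exact le_refl_Le _ _

end IterOrd
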